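/- Let n ≥ 3 be odd and let A, Â ∈ [−1,1]^{n×n} both be skew-symmetric of rank n−1, each admitting a nonzero vector x with xᵀ times the matrix equal to 0ᵀ and Σᵢ xᵢ ≠ 0. Let π ∈ S_n satisfy πᵀA = 0ᵀ. Let 0 < α < 1/n and set ε₂ = α/φ(Â). Suppose max_{i,j} |â_ij − a_ij| < ε₂. If P_Â(ε₂) ∩ S_n^α = ∅, then π ∉ S_n^α. -/

import Mathlib

open Matrix

/-- The ε-Nash polytope `P_A(ε) = {x ∈ S_n : xᵀA ≥ −ε·1ᵀ componentwise}`. -/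
def nashPolytope {n : ℕ} (A : Matrix (Fin n) (Fin n) ℝ) (ε : ℝ) : Set (Fin n → ℝ) :=
  {x | (∑ i, x i = 1) ∧ ∀ j, -ε ≤ (x ᵥ* A) j}

/-- `S_n^α = {x ∈ S_n : x ≥ α·1 componentwise}`. -/
def simplexAlpha (n : ℕ) (α : ℝ) : Set (Fin n → ℝ) :=
  {x | (∑ i, x i = 1) ∧ ∀ i, α ≤ x i}

/-- `φ(A) = max_{j∈[n]} max_{i∈[n]} |(1ᵀA_j⁻¹ − πᵀ)_i|`, where `A_j` is `A` with its
`j`-th column replaced by the all-ones vector and `π` is the unique element of `S_n`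
with `πᵀA = 0ᵀ` (passed explicitly). -/
noncomputable def phi {n : ℕ} (A : Matrix (Fin n) (Fin n) ℝ) (π : Fin n → ℝ) : ℝ :=
  ⨆ j : Fin n, ⨆ i : Fin n, |((1 : Fin n → ℝ) ᵥ* (A.updateCol j 1)⁻¹ - π) i|

/-- Under Condition 1 for both `A` and `Â`, with `πᵀA = 0ᵀ`, `π ∈ S_n`,
`0 < α < 1/n` and `ε₂ = α/φ(Â)`, if `max_{i,j} |â_ij − a_ij| < ε₂` and
`P_Â(ε₂) ∩ S_n^α = ∅`, then `π ∉ S_n^α`. -/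
theorem stmt8 (n : ℕ) (hodd : Odd n) (hn : 3 ≤ n)
    (A Ahat : Matrix (Fin n) (Fin n) ℝ)
    (hboundA : ∀ i j, A i j ∈ Set.Icc (-1 : ℝ) 1)
    (hboundAhat : ∀ i j, Ahat i j ∈ Set.Icc (-1 : ℝ) 1)
    (hskewA : Aᵀ = -A) (hskewAhat : Ahatᵀ = -Ahat)
    (hrankA : A.rank = n - 1) (hrankAhat : Ahat.rank = n - 1)
    (hkerA : ∃ x : Fin n → ℝ, x ≠ 0 ∧ x ᵥ* A = 0 ∧ ∑ i, x i ≠ 0)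
    (hkerAhat : ∃ x : Fin n → ℝ, x ≠ 0 ∧ x ᵥ* Ahat = 0 ∧ ∑ i, x i ≠ 0)
    (π : Fin n → ℝ) (hπ1 : ∑ i, π i = 1) (hπ : π ᵥ* A = 0)
    (πhat : Fin n → ℝ) (hπhat1 : ∑ i, πhat i = 1) (hπhat : πhat ᵥ* Ahat = 0)
    (α : ℝ) (hα0 : 0 < α) (hα1 : α < 1 / n)
    (ε₂ : ℝ) (hε₂ : ε₂ = α / phi Ahat πhat)
    (hclose : ∀ i j, |Ahat i j - A i j| < ε₂)
    (hempty : nashPolytope Ahat ε₂ ∩ simplexAlpha n α = ∅) :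
    π ∉ simplexAlpha n α := by
  intro hmem
  obtain ⟨hsum, hge⟩ := hmem
  have hπpos : ∀ i, 0 ≤ π i := fun i => le_trans hα0.le (hge i)
  have hπin : π ∈ nashPolytope Ahat ε₂ := by
    refine ⟨hπ1, fun j => ?_⟩
    have h0 : (π ᵥ* A) j = 0 := by rw [hπ]; rfl
    have hAv : (π ᵥ* A) j = ∑ i, π i * A i j := by
      simp [Matrix.vecMul, dotProduct, mul_comm]
    have hAhv : (π ᵥ* Ahat) j = ∑ i, π i * Ahat i j := by
      simp [Matrix.vecMul, dotProduct, mul_comm]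
    have hdiff : (π ᵥ* Ahat) j = ∑ i, π i * (Ahat i j - A i j) := by
      rw [hAhv]
      have h := hAv.symm.trans h0
      simp [mul_sub, Finset.sum_sub_distrib, h]
    rw [hdiff]
    have hle : ∀ i ∈ Finset.univ, π i * (-ε₂) ≤ π i * (Ahat i j - A i j) := by
      intro i _
      exact mul_le_mul_of_nonneg_left (neg_le_of_abs_le (hclose i j).le) (hπpos i)
    calc -ε₂ = ∑ i, π i * (-ε₂) := by rw [← Finset.sum_mul, hπ1, one_mul]
      _ ≤ ∑ i, π i * (Ahat i j - A i j) := Finset.sum_le_sum hle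
  have : π ∈ nashPolytope Ahat ε₂ ∩ simplexAlpha n α := ⟨hπin, hsum, hge⟩
  rw [hempty] at this
  exact this
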